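/- Let k ≥ 1 be an integer and let N ≥ 0 be any number of variables. In the polynomial ring ℤ[x_1,…,x_N], m_{(2^k)} = Σ_{α ⊨ 2k} (−1)^{k + ℓ(α)} · (erun(α) + 1) · h_α, where the sum runs over all compositions α of 2k, ℓ(α) is the number of parts of α, h_α := h_{α_1} h_{α_2} ⋯ h_{α_{ℓ(α)}}, and erun(α) is the largest integer e with 0 ≤ e ≤ ℓ(α) such that α_1, α_2, …, α_e are all even. (This is the q = 1 specialization of the paper's corollary (−1)^k m_{2^k} = Σ_{α ⊨ 2k} [erun(α)+1]_q C_α, using C_α|_{q=1} = (−1)^{|α|−ℓ(α)} h_α.) -/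

import Mathlib

open MvPolynomial Finset

/-- The rectangular partition `(2^k)` with `k` parts all equal to `2`. -/
def rectPartition (a k : ℕ) : Nat.Partition (a * k) :=
  Nat.Partition.ofSums (a * k) (Multiset.replicate k a)
    (by rw [Multiset.sum_replicate, smul_eq_mul, mul_comm])

/-- `erun(α)`: the largest `e ≤ ℓ(α)` such that `α₁, …, α_e` are all even, i.e. the length
of the maximal even prefix of `α`. -/
def erun {n : ℕ} (α : Composition n) : ℕ :=
  (α.blocks.takeWhile (fun x => x % 2 == 0)).length

open MvPolynomial Finset PowerSeries

noncomputable section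

variable {N : ℕ}

local notation "R" => MvPolynomial (Fin N) ℤ

/-- complete homogeneous symmetric polynomial restricted to variables in `S`. -/
def hS (S : Finset (Fin N)) (n : ℕ) : R := ∑ m ∈ S.sym n, ((m : Multiset (Fin N)).map MvPolynomial.X).prod

lemma hS_zero (S : Finset (Fin N)) : hS S 0 = 1 := by
  rw [hS, Finset.sym_zero, Finset.sum_singleton]
  rw [show ((∅ : Sym (Fin N) 0) : Multiset (Fin N)) = 0 from rfl]
  simp

lemma hS_univ (n : ℕ) : hS Finset.univ n = hsymm (Fin N) ℤ n := by
  rw [hS, hsymm, Finset.sym_univ]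
  rfl

lemma hS_empty (n : ℕ) : hS (∅ : Finset (Fin N)) (n + 1) = 0 := by
  simp [hS, Finset.sym_empty]

lemma hS_insert {a : Fin N} {S : Finset (Fin N)} (ha : a ∉ S) (n : ℕ) :
    hS (insert a S) (n + 1) = hS S (n + 1) + MvPolynomial.X a * hS (insert a S) n := by
  classical
  rw [hS, ← Finset.sum_filter_add_sum_filter_not ((insert a S).sym (n+1)) (fun m => a ∉ m)]
  congr 1
  · -- multisets avoiding a
    rw [hS]
    apply Finset.sum_congr _ (fun _ _ => rfl)
    ext m
    simp only [Finset.mem_filter, Finset.mem_sym_iff, Finset.mem_insert]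
    constructor
    · rintro ⟨h1, h2⟩
      intro b hb
      rcases h1 b hb with rfl | h
      · exact absurd hb h2
      · exact h
    · intro h
      exact ⟨fun b hb => Or.inr (h b hb), fun ham => ha (h a ham)⟩
  · -- multisets containing a
    simp only [not_not]
    rw [hS, Finset.mul_sum]
    refine Finset.sum_nbij' (fun m => if h : a ∈ m then m.erase a h else Sym.replicate n a)
      (fun m => a ::ₛ m) ?_ ?_ ?_ ?_ ?_
    · intro m hm
      simp only [Finset.mem_filter] at hm
      rw [dif_pos hm.2]
      rw [Finset.mem_sym_iff]
      intro b hb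
      refine Finset.mem_sym_iff.1 hm.1 b ?_
      have : b ∈ (m.erase a hm.2 : Multiset (Fin N)) := hb
      rw [Sym.coe_erase] at this
      exact Multiset.mem_of_mem_erase this
    · intro m hm
      simp only [Finset.mem_filter, Finset.mem_sym_iff]
      constructor
      · intro b hb
        rcases Sym.mem_cons.1 hb with rfl | h
        · exact Finset.mem_insert_self _ _
        · exact Finset.mem_sym_iff.1 hm b h
      · exact Sym.mem_cons_self a m
    · intro m hm
      simp only [Finset.mem_filter] at hm
      rw [dif_pos hm.2]
      exact Sym.cons_erase hm.2
    · intro m hm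
      rw [dif_pos (Sym.mem_cons_self a m)]
      exact Sym.erase_cons_head m a
    · intro m hm
      simp only [Finset.mem_filter] at hm
      rw [dif_pos hm.2]
      have : (m : Multiset (Fin N)) = a ::ₘ (m : Multiset (Fin N)).erase a := (Multiset.cons_erase hm.2).symm
      conv_lhs => rw [this]
      rw [Multiset.map_cons, Multiset.prod_cons, Sym.coe_erase]

end

noncomputable section

variable {N : ℕ}

local notation "R" => MvPolynomial (Fin N) ℤ

/-- `∏_{i∈S} (1 - x_i t)` as a power series. -/
def Pser (S : Finset (Fin N)) : PowerSeries R :=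
  ∏ i ∈ S, (1 - PowerSeries.C (MvPolynomial.X i) * PowerSeries.X)

lemma one_sub_mul_hS (a : Fin N) (S : Finset (Fin N)) (ha : a ∉ S) :
    (1 - PowerSeries.C (MvPolynomial.X a) * PowerSeries.X) *
      PowerSeries.mk (hS (insert a S)) = PowerSeries.mk (hS S) := by
  refine PowerSeries.ext fun n => ?_
  rw [sub_mul, one_mul, map_sub, PowerSeries.coeff_mk, mul_assoc, PowerSeries.coeff_C_mul]
  cases n with
  | zero =>
    rw [PowerSeries.coeff_zero_X_mul]
    simp [hS_zero]
  | succ n =>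
    simp only [PowerSeries.coeff_succ_X_mul, PowerSeries.coeff_mk]
    rw [hS_insert ha n]
    ring

lemma Pser_mul_hS (S : Finset (Fin N)) : Pser S * PowerSeries.mk (hS S) = 1 := by
  classical
  induction S using Finset.induction_on with
  | empty =>
    have h1 : PowerSeries.mk (hS (∅ : Finset (Fin N))) = 1 := by
      refine PowerSeries.ext fun n => ?_
      cases n with
      | zero => simp [hS_zero]
      | succ n => simp [hS_empty, PowerSeries.coeff_one]
    rw [h1, Pser, Finset.prod_empty, one_mul]
  | @insert a S ha ih =>
    rw [Pser, Finset.prod_insert ha, ← Pser, mul_assoc, mul_comm (Pser S), ← mul_assoc,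
      one_sub_mul_hS a S ha, mul_comm]
    exact ih

end

noncomputable section

variable {N : ℕ}

local notation "R" => MvPolynomial (Fin N) ℤ

open PowerSeries

def Hser : PowerSeries R := PowerSeries.mk (hsymm (Fin N) ℤ)

def Qser (S : Finset (Fin N)) : PowerSeries R :=
  ∏ i ∈ S, (1 + PowerSeries.C (MvPolynomial.X i) * PowerSeries.X)

def Mser : PowerSeries R :=
  ∏ i ∈ Finset.univ, (1 - PowerSeries.C (MvPolynomial.X i ^ 2) * PowerSeries.X ^ 2)

lemma P_mul_H : Pser (Finset.univ : Finset (Fin N)) * Hser = 1 := by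
  have : Hser = PowerSeries.mk (hS (Finset.univ : Finset (Fin N))) := by
    refine PowerSeries.ext fun n => ?_
    rw [Hser, PowerSeries.coeff_mk, PowerSeries.coeff_mk, hS_univ]
  rw [this]
  exact Pser_mul_hS _

lemma rescale_C' (a c : R) : PowerSeries.rescale a (PowerSeries.C c) = PowerSeries.C c := by
  refine PowerSeries.ext fun n => ?_
  rw [PowerSeries.coeff_rescale]
  cases n with
  | zero => simp
  | succ n => simp [PowerSeries.coeff_C]

lemma J_P : PowerSeries.rescale (-1 : R) (Pser Finset.univ) = Qser Finset.univ := by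
  rw [Pser, Qser, map_prod]
  refine Finset.prod_congr rfl fun i _ => ?_
  rw [map_sub, map_one, map_mul, rescale_C', PowerSeries.rescale_neg_one_X]
  ring

def Hm : PowerSeries R := PowerSeries.mk (fun n => (-1 : R) ^ n * hsymm (Fin N) ℤ n)

lemma J_H : PowerSeries.rescale (-1 : R) Hser = Hm := by
  rw [Hser, PowerSeries.rescale_mk, Hm]

lemma Q_mul_Hm : Qser (Finset.univ : Finset (Fin N)) * Hm = 1 := by
  have := congrArg (PowerSeries.rescale (-1 : R)) P_mul_H
  rwa [map_mul, map_one, J_P, J_H] at this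

lemma P_mul_Q : Pser (Finset.univ : Finset (Fin N)) * Qser Finset.univ = Mser := by
  rw [Pser, Qser, Mser, ← Finset.prod_mul_distrib]
  refine Finset.prod_congr rfl fun i _ => ?_
  have : PowerSeries.C (MvPolynomial.X i ^ 2 : MvPolynomial (Fin N) ℤ) * PowerSeries.X ^ 2
      = (PowerSeries.C (MvPolynomial.X i : MvPolynomial (Fin N) ℤ) * PowerSeries.X) ^ 2 := by
    rw [map_pow, mul_pow]
  rw [this]
  ring

lemma prod_one_sub_sq (S : Finset (Fin N)) :
    ∏ i ∈ S, (1 - PowerSeries.C (MvPolynomial.X i ^ 2) * PowerSeries.X ^ 2) =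
      ∑ T ∈ S.powerset, (-1 : PowerSeries R) ^ T.card *
        PowerSeries.C (∏ i ∈ T, MvPolynomial.X i ^ 2) * PowerSeries.X ^ (2 * T.card) := by
  classical
  induction S using Finset.induction_on with
  | empty => simp
  | @insert a S ha ih =>
    rw [Finset.prod_insert ha, ih, Finset.sum_powerset_insert ha, sub_mul, one_mul,
      Finset.mul_sum, sub_eq_add_neg, ← Finset.sum_neg_distrib]
    congr 1
    refine Finset.sum_congr rfl fun T hT => ?_
    have haT : a ∉ T := fun h => ha (Finset.mem_powerset.1 hT h)
    rw [Finset.card_insert_of_notMem haT, Finset.prod_insert haT, map_mul]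
    rw [pow_succ, Nat.mul_succ, pow_add]
    ring

end

noncomputable section

variable {N : ℕ}

local notation "R" => MvPolynomial (Fin N) ℤ

lemma coeff_Mser (k : ℕ) :
    (PowerSeries.coeff (2 * k)) Mser =
      (-1 : R) ^ k * ∑ T ∈ Finset.powersetCard k (Finset.univ : Finset (Fin N)),
        ∏ i ∈ T, MvPolynomial.X i ^ 2 := by
  classical
  rw [Mser, prod_one_sub_sq, map_sum]
  have key : ∀ T ∈ (Finset.univ : Finset (Fin N)).powerset,
      (PowerSeries.coeff (2 * k)) ((-1 : PowerSeries R) ^ T.card *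
        PowerSeries.C (∏ i ∈ T, MvPolynomial.X i ^ 2) * PowerSeries.X ^ (2 * T.card)) =
      if T.card = k then (-1 : R) ^ k * ∏ i ∈ T, MvPolynomial.X i ^ 2 else 0 := by
    intro T _
    have h1 : ((-1 : PowerSeries R) ^ T.card) = PowerSeries.C ((-1 : R) ^ T.card) := by
      rw [map_pow, map_neg, map_one]
    rw [h1, ← map_mul, PowerSeries.coeff_C_mul, PowerSeries.coeff_X_pow]
    by_cases h : T.card = k
    · rw [if_pos h, h, if_pos rfl, mul_one]
    · rw [if_neg h, if_neg, mul_zero]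
      omega
  rw [Finset.sum_congr rfl key, ← Finset.sum_filter, Finset.mul_sum]
  refine Finset.sum_congr ?_ fun _ _ => rfl
  rw [Finset.powersetCard_eq_filter]

end

noncomputable section

variable {N : ℕ}

local notation "R" => MvPolynomial (Fin N) ℤ

lemma rectPartition_parts (k : ℕ) : (rectPartition 2 k).parts = Multiset.replicate k 2 := by
  rw [rectPartition, Nat.Partition.ofSums_parts, Multiset.filter_eq_self]
  intro a ha
  rw [Multiset.eq_of_mem_replicate ha]
  decide

lemma ofSym_eq_rect_iff {k : ℕ} (s : Sym (Fin N) (2 * k)) :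
    Nat.Partition.ofSym s = rectPartition 2 k ↔
      ((s : Multiset (Fin N)).toFinset.card = k ∧
        ∀ a ∈ (s : Multiset (Fin N)), (s : Multiset (Fin N)).count a = 2) := by
  rw [Nat.Partition.ext_iff, rectPartition_parts]
  show (s : Multiset (Fin N)).dedup.map (s : Multiset (Fin N)).count = _ ↔ _
  rw [Multiset.eq_replicate]
  constructor
  · rintro ⟨h1, h2⟩
    refine ⟨?_, fun a ha => ?_⟩
    · rw [Multiset.card_toFinset, ← Multiset.card_map ((s : Multiset (Fin N)).count), h1]
    · exact h2 _ (Multiset.mem_map_of_mem _ (Multiset.mem_dedup.2 ha))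
  · rintro ⟨h1, h2⟩
    refine ⟨?_, fun b hb => ?_⟩
    · rw [Multiset.card_map, ← Multiset.toFinset_val (s : Multiset (Fin N))]
      exact h1
    · obtain ⟨a, ha, rfl⟩ := Multiset.mem_map.1 hb
      exact h2 a (Multiset.mem_dedup.1 ha)

lemma msymm_rect (k : ℕ) :
    msymm (Fin N) ℤ (rectPartition 2 k) =
      ∑ T ∈ Finset.powersetCard k (Finset.univ : Finset (Fin N)),
        ∏ i ∈ T, MvPolynomial.X i ^ 2 := by
  classical
  rw [msymm]
  rw [← Finset.sum_finset_coe (s := Finset.powersetCard k (Finset.univ : Finset (Fin N)))]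
  refine Fintype.sum_bijective
    (fun s => (⟨(s.1 : Multiset (Fin N)).toFinset, by
      rw [Finset.mem_coe, Finset.mem_powersetCard_univ]
      exact ((ofSym_eq_rect_iff s.1).1 s.2).1⟩ :
        (Finset.powersetCard k (Finset.univ : Finset (Fin N)) : Set (Finset (Fin N)))))
    ?_ _ _ ?_
  · constructor
    · -- injective
      rintro ⟨s, hs⟩ ⟨t, ht⟩ h
      obtain ⟨-, hs2⟩ := (ofSym_eq_rect_iff s).1 hs
      obtain ⟨-, ht2⟩ := (ofSym_eq_rect_iff t).1 ht
      simp only [Subtype.mk.injEq] at h ⊢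
      refine Sym.coe_injective (Multiset.ext.2 fun a => ?_)
      by_cases hmem : a ∈ (s : Multiset (Fin N))
      · have hmem' : a ∈ (t : Multiset (Fin N)) := by
          have : a ∈ (s : Multiset (Fin N)).toFinset := Multiset.mem_toFinset.2 hmem
          rw [h] at this
          exact Multiset.mem_toFinset.1 this
        rw [hs2 a hmem, ht2 a hmem']
      · have hmem' : a ∉ (t : Multiset (Fin N)) := by
          intro hc
          have : a ∈ (t : Multiset (Fin N)).toFinset := Multiset.mem_toFinset.2 hc
          rw [← h] at this
          exact hmem (Multiset.mem_toFinset.1 this)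
        rw [Multiset.count_eq_zero.2 hmem, Multiset.count_eq_zero.2 hmem']
    · -- surjective
      rintro ⟨T, hT⟩
      rw [Finset.mem_coe, Finset.mem_powersetCard_univ] at hT
      refine ⟨⟨⟨T.val + T.val, by rw [Multiset.card_add]; show T.card + T.card = 2 * k; omega⟩, ?_⟩, ?_⟩
      · refine (ofSym_eq_rect_iff _).2 ?_
        constructor
        · show (T.val + T.val).toFinset.card = k
          rw [Multiset.toFinset_add, Finset.val_toFinset, Finset.union_self]
          exact hT
        · intro a ha
          show (T.val + T.val).count a = 2
          have haT : a ∈ T.val := by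
            rcases Multiset.mem_add.1 ha with h | h <;> exact h
          rw [Multiset.count_add, Multiset.count_eq_one_of_mem T.nodup haT]
      · apply Subtype.ext
        show (T.val + T.val).toFinset = T
        rw [Multiset.toFinset_add, Finset.val_toFinset, Finset.union_self]
  · -- values agree
    rintro ⟨s, hs⟩
    obtain ⟨h1, h2⟩ := (ofSym_eq_rect_iff s).1 hs
    show ((s : Multiset (Fin N)).map MvPolynomial.X).prod = _
    have hsum : (s : Multiset (Fin N)) =
        (s : Multiset (Fin N)).toFinset.val + (s : Multiset (Fin N)).toFinset.val := by
      refine Multiset.ext.2 fun a => ?_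
      rw [Multiset.count_add, Multiset.toFinset_val, Multiset.count_dedup]
      by_cases ha : a ∈ (s : Multiset (Fin N))
      · rw [if_pos ha, h2 a ha]
      · rw [if_neg ha, Multiset.count_eq_zero.2 ha]
    conv_lhs => rw [hsum]
    rw [Multiset.map_add, Multiset.prod_add]
    show _ = ∏ i ∈ (s : Multiset (Fin N)).toFinset, MvPolynomial.X i ^ 2
    rw [Finset.prod_pow, sq, Finset.prod_eq_multiset_prod]

end

section CompositionSplit

lemma Composition.blocks_ne_nil' {n : ℕ} (α : Composition (n + 1)) : α.blocks ≠ [] := by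
  intro h
  have := α.blocks_sum
  rw [h] at this
  simp at this

/-- Split a composition of `n+1` into its first block (minus one, as `i : Fin (n+1)`) and the
rest, a composition of `n - i`. -/
def splitCompEquiv (n : ℕ) : Composition (n + 1) ≃ (i : Fin (n + 1)) × Composition (n - i) where
  toFun α := by
    have hne := Composition.blocks_ne_nil' α
    have hhead : α.blocks.head hne ∈ α.blocks := List.head_mem hne
    have hpos : 0 < α.blocks.head hne := α.blocks_pos hhead
    have hsum : α.blocks.head hne + α.blocks.tail.sum = n + 1 := by
      conv_rhs => rw [← α.blocks_sum]
      conv_rhs => rw [← List.cons_head_tail hne]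
      rw [List.sum_cons]
    exact ⟨⟨α.blocks.head hne - 1, by omega⟩,
      ⟨α.blocks.tail, fun hi => α.blocks_pos (List.mem_of_mem_tail hi), by simp; omega⟩⟩
  invFun p :=
    ⟨(p.1 + 1) :: p.2.blocks, by
      intro i hi
      rcases List.mem_cons.1 hi with rfl | h
      · omega
      · exact p.2.blocks_pos h, by
      rw [List.sum_cons, p.2.blocks_sum]
      have := p.1.2
      omega⟩
  left_inv α := by
    have hne := Composition.blocks_ne_nil' α
    have hhead : α.blocks.head hne ∈ α.blocks := List.head_mem hne
    have hpos : 0 < α.blocks.head hne := α.blocks_pos hhead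
    apply Composition.ext
    simp only
    rw [Nat.sub_add_cancel hpos]
    exact List.cons_head_tail hne
  right_inv p := by
    rcases p with ⟨i, β⟩
    rfl

end CompositionSplit

instance : Unique (Composition 0) where
  default := ⟨[], by intro i hi; simp at hi, rfl⟩
  uniq α := by
    apply Composition.ext
    have h := α.blocks_sum
    cases hb : α.blocks with
    | nil => rfl
    | cons a l =>
      exfalso
      rw [hb, List.sum_cons] at h
      have := α.blocks_pos (hb ▸ List.mem_cons_self)
      omega

lemma sum_composition_succ {M : Type*} [AddCommMonoid M] (n : ℕ) (f : List ℕ → M) :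
    ∑ α : Composition (n + 1), f α.blocks =
      ∑ i : Fin (n + 1), ∑ β : Composition (n - i), f (((i : ℕ) + 1) :: β.blocks) := by
  calc ∑ α : Composition (n + 1), f α.blocks
      = ∑ p : (i : Fin (n + 1)) × Composition (n - i), f (((p.1 : ℕ) + 1) :: p.2.blocks) :=
        (Fintype.sum_equiv (splitCompEquiv n).symm
          (fun p : (i : Fin (n + 1)) × Composition (n - i) => f (((p.1 : ℕ) + 1) :: p.2.blocks))
          (fun α => f α.blocks) (fun p => rfl)).symm
    _ = ∑ i : Fin (n + 1), ∑ β : Composition (n - i), f (((i : ℕ) + 1) :: β.blocks) :=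
        Finset.sum_sigma Finset.univ (fun _ => Finset.univ) _

/-- `erun` on lists. -/
def ers (l : List ℕ) : ℕ := (l.takeWhile (fun x => x % 2 == 0)).length

noncomputable section

variable {N : ℕ}

local notation "R" => MvPolynomial (Fin N) ℤ
local notation "hh" => hsymm (Fin N) ℤ

def Scomp (n : ℕ) : R :=
  ∑ α : Composition n, (-1 : R) ^ α.blocks.length * (α.blocks.map hh).prod

def Acomp (n : ℕ) : R :=
  ∑ α : Composition n,
    (-1 : R) ^ α.blocks.length * ((ers α.blocks + 1 : ℕ) : R) * (α.blocks.map hh).prod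

lemma Scomp_zero : Scomp (N := N) 0 = 1 := by
  rw [Scomp, Finset.univ_unique, Finset.sum_singleton]
  show (-1 : R) ^ (List.length []) * ((List.map hh []).prod) = 1
  simp

lemma Acomp_zero : Acomp (N := N) 0 = 1 := by
  rw [Acomp, Finset.univ_unique, Finset.sum_singleton]
  show (-1 : R) ^ (List.length []) * ((ers [] + 1 : ℕ) : R) * ((List.map hh []).prod) = 1
  simp [ers]

lemma Scomp_succ (n : ℕ) :
    Scomp (N := N) (n + 1) = -∑ i : Fin (n + 1), hh ((i : ℕ) + 1) * Scomp (n - i) := by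
  rw [Scomp, sum_composition_succ n (fun l => (-1 : R) ^ l.length * (l.map hh).prod)]
  rw [← Finset.sum_neg_distrib]
  refine Finset.sum_congr rfl fun i _ => ?_
  rw [Scomp, Finset.mul_sum, ← Finset.sum_neg_distrib]
  refine Finset.sum_congr rfl fun β _ => ?_
  rw [List.length_cons, List.map_cons, List.prod_cons, pow_succ]
  ring

lemma Acomp_succ (n : ℕ) :
    Acomp (N := N) (n + 1) = Scomp (n + 1) -
      ∑ i : Fin (n + 1), (if Even ((i : ℕ) + 1) then hh ((i : ℕ) + 1) * Acomp (n - i) else 0) := by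
  rw [Acomp, sum_composition_succ n
    (fun l => (-1 : R) ^ l.length * ((ers l + 1 : ℕ) : R) * (l.map hh).prod)]
  rw [Scomp_succ, sub_eq_add_neg, ← neg_add, ← Finset.sum_add_distrib, ← Finset.sum_neg_distrib]
  refine Finset.sum_congr rfl fun i _ => ?_
  have hers : ∀ l : List ℕ, ers (((i : ℕ) + 1) :: l) =
      if Even ((i : ℕ) + 1) then ers l + 1 else 0 := by
    intro l
    rw [ers, List.takeWhile_cons]
    by_cases h : Even ((i : ℕ) + 1)
    · rw [if_pos h, if_pos, List.length_cons, ers]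
      simpa [Nat.even_iff] using h
    · rw [if_neg h, if_neg, List.length_nil]
      simpa [Nat.even_iff] using h
  by_cases h : Even ((i : ℕ) + 1)
  · rw [if_pos h, Scomp, Acomp, Finset.mul_sum, Finset.mul_sum, ← Finset.sum_add_distrib,
      ← Finset.sum_neg_distrib]
    refine Finset.sum_congr rfl fun β _ => ?_
    rw [hers, if_pos h, List.length_cons, List.map_cons, List.prod_cons, pow_succ]
    push_cast
    ring
  · rw [if_neg h, add_zero, Scomp, Finset.mul_sum, ← Finset.sum_neg_distrib]
    refine Finset.sum_congr rfl fun β _ => ?_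
    rw [hers, if_neg h, List.length_cons, List.map_cons, List.prod_cons, pow_succ]
    push_cast
    ring

end

noncomputable section

variable {N : ℕ}

local notation "R" => MvPolynomial (Fin N) ℤ
local notation "hh" => hsymm (Fin N) ℤ

def Hev : PowerSeries R := PowerSeries.mk (fun n => if Even n then hh n else 0)

lemma H_mul_S : Hser * PowerSeries.mk (Scomp (N := N)) = 1 := by
  refine PowerSeries.ext fun n => ?_
  rw [PowerSeries.coeff_mul, PowerSeries.coeff_one]
  simp only [Hser, PowerSeries.coeff_mk]
  cases n with
  | zero =>
    rw [Finset.Nat.antidiagonal_zero, Finset.sum_singleton, if_pos rfl]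
    simp [Scomp_zero]
  | succ n =>
    rw [Finset.Nat.sum_antidiagonal_eq_sum_range_succ_mk, Finset.sum_range_succ', if_neg
      (Nat.succ_ne_zero n)]
    simp only [Nat.succ_sub_succ_eq_sub, Nat.sub_zero, hsymm_zero, one_mul]
    rw [Scomp_succ, Fin.sum_univ_eq_sum_range (fun i => hh (i + 1) * Scomp (n - i)) (n + 1)]
    ring

lemma Hev_mul_A : Hev * PowerSeries.mk (Acomp (N := N)) = PowerSeries.mk (Scomp (N := N)) := by
  refine PowerSeries.ext fun n => ?_
  rw [PowerSeries.coeff_mul]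
  simp only [Hev, PowerSeries.coeff_mk]
  cases n with
  | zero =>
    rw [Finset.Nat.antidiagonal_zero, Finset.sum_singleton]
    simp [Scomp_zero, Acomp_zero]
  | succ n =>
    rw [Finset.Nat.sum_antidiagonal_eq_sum_range_succ_mk, Finset.sum_range_succ']
    simp only [Nat.succ_sub_succ_eq_sub, Nat.sub_zero, if_pos (Even.zero), hsymm_zero, one_mul]
    rw [Acomp_succ, Fin.sum_univ_eq_sum_range
      (fun i => if Even (i + 1) then hh (i + 1) * Acomp (n - i) else 0) (n + 1)]
    simp only [ite_mul, zero_mul]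
    ring

lemma J_Hev : PowerSeries.rescale (-1 : R) Hev = Hev := by
  refine PowerSeries.ext fun n => ?_
  rw [PowerSeries.coeff_rescale, Hev, PowerSeries.coeff_mk]
  by_cases h : Even n
  · rw [if_pos h] at *
    rw [h.neg_one_pow, one_mul]
  · rw [if_neg h] at *
    rw [mul_zero]

lemma H_add_Hm : Hser (N := N) + Hm = Hev + Hev := by
  refine PowerSeries.ext fun n => ?_
  rw [map_add, map_add, Hser, Hm, Hev]
  simp only [PowerSeries.coeff_mk]
  by_cases h : Even n
  · rw [if_pos h, h.neg_one_pow, one_mul]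
  · rw [if_neg h, (Nat.not_even_iff_odd.1 h).neg_one_pow, add_zero, neg_one_mul,
      add_neg_cancel]

lemma constantCoeff_Hser : PowerSeries.constantCoeff (Hser (N := N)) = 1 := by
  rw [Hser, ← PowerSeries.coeff_zero_eq_constantCoeff, PowerSeries.coeff_mk, hsymm_zero]

lemma constantCoeff_Hm : PowerSeries.constantCoeff (Hm (N := N)) = 1 := by
  rw [Hm, ← PowerSeries.coeff_zero_eq_constantCoeff, PowerSeries.coeff_mk, hsymm_zero]
  simp

lemma constantCoeff_Hev : PowerSeries.constantCoeff (Hev (N := N)) = 1 := by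
  rw [Hev, ← PowerSeries.coeff_zero_eq_constantCoeff, PowerSeries.coeff_mk, if_pos Even.zero,
    hsymm_zero]

lemma A_add_JA :
    PowerSeries.mk (Acomp (N := N)) +
      PowerSeries.rescale (-1 : R) (PowerSeries.mk (Acomp (N := N))) = Mser + Mser := by
  have hSP : PowerSeries.mk (Scomp (N := N)) = Pser Finset.univ := by
    calc PowerSeries.mk (Scomp (N := N))
        = (Pser Finset.univ * Hser) * PowerSeries.mk (Scomp (N := N)) := by
          rw [P_mul_H, one_mul]
      _ = Pser Finset.univ * (Hser * PowerSeries.mk (Scomp (N := N))) := mul_assoc _ _ _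
      _ = Pser Finset.univ := by rw [H_mul_S, mul_one]
  have h1 : Hev * PowerSeries.mk (Acomp (N := N)) = Pser Finset.univ := by
    rw [Hev_mul_A, hSP]
  have h2 : Hev * PowerSeries.rescale (-1 : R) (PowerSeries.mk (Acomp (N := N)))
      = Qser Finset.univ := by
    have := congrArg (PowerSeries.rescale (-1 : R)) h1
    rwa [map_mul, J_Hev, J_P] at this
  have hsum : Hev * (PowerSeries.mk (Acomp (N := N)) +
      PowerSeries.rescale (-1 : R) (PowerSeries.mk (Acomp (N := N))))
      = Pser Finset.univ + Qser Finset.univ := by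
    rw [mul_add, h1, h2]
  have hPQ : Pser (Finset.univ : Finset (Fin N)) + Qser Finset.univ = Hev * (Mser + Mser) := by
    have hcan : Hser (N := N) * Hm ≠ 0 := by
      intro h
      have := congrArg (PowerSeries.constantCoeff) h
      rw [map_mul, constantCoeff_Hser, constantCoeff_Hm, map_zero] at this
      simp at this
    refine mul_left_cancel₀ hcan ?_
    calc Hser * Hm * (Pser Finset.univ + Qser Finset.univ)
        = (Pser Finset.univ * Hser) * Hm + (Qser Finset.univ * Hm) * Hser := by ring
      _ = Hser + Hm := by rw [P_mul_H, Q_mul_Hm, one_mul, one_mul, add_comm]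
      _ = Hev + Hev := H_add_Hm
      _ = (Hev + Hev) * ((Pser Finset.univ * Hser) * (Qser Finset.univ * Hm)) := by
          rw [P_mul_H, Q_mul_Hm, one_mul, mul_one]
      _ = Hser * Hm * (Hev * (Pser Finset.univ * Qser Finset.univ + Pser Finset.univ *
            Qser Finset.univ)) := by ring
      _ = Hser * Hm * (Hev * (Mser + Mser)) := by rw [P_mul_Q]
  have hcanHev : (Hev : PowerSeries R) ≠ 0 := by
    intro h
    have := congrArg (PowerSeries.constantCoeff) h
    rw [constantCoeff_Hev, map_zero] at this
    simp at this
  refine mul_left_cancel₀ hcanHev ?_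
  rw [hsum, hPQ]

set_option maxHeartbeats 1000000 in
lemma Acomp_two_mul (k : ℕ) :
    Acomp (N := N) (2 * k) = (-1 : R) ^ k *
      ∑ T ∈ Finset.powersetCard k (Finset.univ : Finset (Fin N)),
        ∏ i ∈ T, MvPolynomial.X i ^ 2 := by
  have := congrArg (PowerSeries.coeff (2 * k)) (A_add_JA (N := N))
  rw [map_add, map_add, PowerSeries.coeff_rescale, PowerSeries.coeff_mk,
    (even_two_mul k).neg_one_pow, one_mul, coeff_Mser] at this
  have h2 : (2 : R) ≠ 0 := two_ne_zero
  apply mul_left_cancel₀ h2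
  linear_combination this

end


/-- The `q = 1` specialization of the corollary for `(-1)^k ∇ m_{2^k}`:
`m_{(2^k)} = ∑_{α ⊨ 2k} (-1)^{k + ℓ(α)} (erun(α) + 1) h_α`. -/
theorem msymm_two_pow_eq_sum_compositions (k N : ℕ) (hk : 1 ≤ k) :
    msymm (Fin N) ℤ (rectPartition 2 k) =
      ∑ α : Composition (2 * k),
        (-1 : MvPolynomial (Fin N) ℤ) ^ (k + α.length) *
          ((erun α + 1 : ℕ) : MvPolynomial (Fin N) ℤ) *
          (α.blocks.map (hsymm (Fin N) ℤ)).prod := by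
  have key : ∑ α : Composition (2 * k),
        (-1 : MvPolynomial (Fin N) ℤ) ^ (k + α.length) *
          ((erun α + 1 : ℕ) : MvPolynomial (Fin N) ℤ) *
          (α.blocks.map (hsymm (Fin N) ℤ)).prod
      = (-1 : MvPolynomial (Fin N) ℤ) ^ k * Acomp (2 * k) := by
    rw [Acomp, Finset.mul_sum]
    refine Finset.sum_congr rfl fun α _ => ?_
    show (-1 : MvPolynomial (Fin N) ℤ) ^ (k + α.blocks.length) *
        ((ers α.blocks + 1 : ℕ) : MvPolynomial (Fin N) ℤ) * _ = _
    rw [pow_add]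
    ring
  rw [key, Acomp_two_mul, msymm_rect, ← mul_assoc, ← pow_add, Even.neg_one_pow ⟨k, rfl⟩,
    one_mul]
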